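/- For real numbers t, s, X, Y with 1/2 < t < 1, 1 < t+s < 3/2, and 0 < t-s < 1/2, setting x = e^{2πi(t+iX)} and y = e^{2πi(s+iY)}, the real 2×2 matrix 2π·(3a+b+c, b-c; b-c, b+c) is positive definite, where a = -Im(1/(1-x)), b = Im(1/(1-xy)), c = Im(1/(1-x/y)). -/

import Mathlib

open Complex Matrix

/-- `x = e^{2πi(t+iX)}`. -/
noncomputable def zz (t X : ℝ) : ℂ :=
  Complex.exp (2 * Real.pi * Complex.I * ((t:ℂ) + (X:ℂ) * Complex.I))

/-- `a = -Im(1/(1-x))`. -/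
noncomputable def aa (t X : ℝ) : ℝ := -(((1 : ℂ) - zz t X)⁻¹).im

/-- `b = Im(1/(1-xy))`. -/
noncomputable def bb (t s X Y : ℝ) : ℝ := (((1 : ℂ) - zz t X * zz s Y)⁻¹).im

/-- `c = Im(1/(1-x/y))`. -/
noncomputable def cc (t s X Y : ℝ) : ℝ := (((1 : ℂ) - zz t X / zz s Y)⁻¹).im

lemma zz_im (u V : ℝ) : (zz u V).im = Real.exp (-(2 * Real.pi * V)) * Real.sin (2 * Real.pi * u) := by
  have h : (2 * Real.pi * Complex.I * ((u:ℂ) + (V:ℂ) * Complex.I)) =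
      Complex.mk (-(2 * Real.pi * V)) (2 * Real.pi * u) := by
    apply Complex.ext <;> simp [Complex.mul_re, Complex.mul_im]
  rw [zz, h, Complex.exp_im]

lemma zz_mul (t s X Y : ℝ) : zz t X * zz s Y = zz (t + s) (X + Y) := by
  rw [zz, zz, zz, ← Complex.exp_add]
  congr 1
  push_cast
  ring

lemma zz_div (t s X Y : ℝ) : zz t X / zz s Y = zz (t - s) (X - Y) := by
  rw [zz, zz, zz, ← Complex.exp_sub]
  congr 1
  push_cast
  ring

lemma inv_one_sub_im (z : ℂ) : ((1 - z)⁻¹).im = z.im / Complex.normSq (1 - z) := by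
  rw [Complex.inv_im]
  simp [Complex.sub_im]

lemma im_pos_inv (z : ℂ) (h : 0 < z.im) : 0 < ((1 - z)⁻¹).im := by
  rw [inv_one_sub_im]
  apply div_pos h
  rw [Complex.normSq_pos]
  intro hz
  rw [sub_eq_zero] at hz
  rw [← hz] at h
  simp at h

lemma zz_im_pos {u : ℝ} (V : ℝ) (h1 : 0 < u) (h2 : u < 1/2) : 0 < (zz u V).im := by
  rw [zz_im]
  apply mul_pos (Real.exp_pos _)
  apply Real.sin_pos_of_pos_of_lt_pi
  · positivity
  · nlinarith [Real.pi_pos]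

lemma zz_im_pos' {u : ℝ} (V : ℝ) (h1 : 1 < u) (h2 : u < 3/2) : 0 < (zz u V).im := by
  rw [zz_im]
  apply mul_pos (Real.exp_pos _)
  have : Real.sin (2 * Real.pi * u) = Real.sin (2 * Real.pi * u - 2 * Real.pi) := by
    rw [Real.sin_sub_two_pi]
  rw [this]
  apply Real.sin_pos_of_pos_of_lt_pi <;> nlinarith [Real.pi_pos]

lemma aa_pos (t X : ℝ) (ht : 1/2 < t) (ht1 : t < 1) : 0 < aa t X := by
  rw [aa, inv_one_sub_im, zz_im, neg_pos]
  apply div_neg_of_neg_of_pos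
  · apply mul_neg_of_pos_of_neg (Real.exp_pos _)
    have h : Real.sin (2 * Real.pi * t) = -Real.sin (2 * Real.pi * t - Real.pi) := by
      rw [Real.sin_sub_pi]; ring
    rw [h, neg_lt_zero]
    apply Real.sin_pos_of_pos_of_lt_pi <;> nlinarith [Real.pi_pos]
  · rw [Complex.normSq_pos]
    intro hz
    rw [sub_eq_zero] at hz
    have him : (zz t X).im = 0 := by rw [← hz]; simp
    rw [zz_im] at him
    have hs : Real.sin (2 * Real.pi * t) = 0 := by
      rcases mul_eq_zero.mp him with h | h
      · exact absurd h (Real.exp_pos _).ne'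
      · exact h
    have : Real.sin (2 * Real.pi * t - Real.pi) = 0 := by
      rw [Real.sin_sub_pi, hs, neg_zero]
    have hp : 0 < 2 * Real.pi * t - Real.pi := by nlinarith [Real.pi_pos]
    have hq : 2 * Real.pi * t - Real.pi < Real.pi := by nlinarith [Real.pi_pos]
    nlinarith [Real.sin_pos_of_pos_of_lt_pi hp hq]

lemma bb_pos (t s X Y : ℝ) (hts1 : 1 < t + s) (hts2 : t + s < 3/2) : 0 < bb t s X Y := by
  rw [bb, zz_mul]
  exact im_pos_inv _ (zz_im_pos' _ hts1 hts2)

lemma cc_pos (t s X Y : ℝ) (hd1 : 0 < t - s) (hd2 : t - s < 1/2) : 0 < cc t s X Y := by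
  rw [cc, zz_div]
  exact im_pos_inv _ (zz_im_pos _ hd1 hd2)

/-- For `1/2 < t < 1`, `1 < t+s < 3/2`, `0 < t-s < 1/2`, the matrix
`2π (3a+b+c, b-c; b-c, b+c)` is positive definite. -/
theorem hessian_posdef (t s X Y : ℝ)
    (ht : 1/2 < t) (ht1 : t < 1) (hts1 : 1 < t + s) (hts2 : t + s < 3/2)
    (hd1 : 0 < t - s) (hd2 : t - s < 1/2) :
    ((2 * Real.pi) •
      (!![3 * aa t X + bb t s X Y + cc t s X Y, bb t s X Y - cc t s X Y;
          bb t s X Y - cc t s X Y, bb t s X Y + cc t s X Y] :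
        Matrix (Fin 2) (Fin 2) ℝ)).PosDef := by
  have ha := aa_pos t X ht ht1
  have hb := bb_pos t s X Y hts1 hts2
  have hc := cc_pos t s X Y hd1 hd2
  have hπ := Real.pi_pos
  set a := aa t X
  set b := bb t s X Y
  set c := cc t s X Y
  rw [Matrix.posDef_iff_dotProduct_mulVec]
  constructor
  · ext i j
    fin_cases i <;> fin_cases j <;> simp [Matrix.conjTranspose_apply]
  · intro x hx
    have key : 0 < 3 * a * (x 0)^2 + b * (x 0 + x 1)^2 + c * (x 0 - x 1)^2 := by
      rcases Function.ne_iff.mp hx with ⟨i, hi⟩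
      fin_cases i
      · replace hi : x 0 ≠ 0 := hi
        have h0 : 0 < (x 0)^2 := sq_pos_of_ne_zero hi
        nlinarith [mul_nonneg hb.le (sq_nonneg (x 0 + x 1)),
          mul_nonneg hc.le (sq_nonneg (x 0 - x 1)), mul_pos ha h0]
      · replace hi : x 1 ≠ 0 := hi
        rcases eq_or_ne (x 0 + x 1) 0 with h | h
        · have h1 : x 0 - x 1 = -2 * x 1 := by linarith [h]
          have h2 : 0 < (x 0 - x 1)^2 :=
            sq_pos_of_ne_zero (fun hh => hi (by rw [h1] at hh; linarith))
          nlinarith [mul_nonneg hb.le (sq_nonneg (x 0 + x 1)),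
            mul_nonneg ha.le (sq_nonneg (x 0)), mul_pos hc h2]
        · have h2 : 0 < (x 0 + x 1)^2 := sq_pos_of_ne_zero h
          nlinarith [mul_nonneg hc.le (sq_nonneg (x 0 - x 1)),
            mul_nonneg ha.le (sq_nonneg (x 0)), mul_pos hb h2]
    simp only [Matrix.smul_apply, Matrix.mulVec, dotProduct, Fin.sum_univ_two,
      Pi.star_apply, star_trivial, Matrix.smul_mulVec, Pi.smul_apply, smul_eq_mul]
    simp [Matrix.mulVec, dotProduct, Fin.sum_univ_two, Matrix.smul_apply, smul_eq_mul]
    nlinarith [mul_pos hπ key]
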